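/- arXiv:2402.12724 — 2 statements merged into one kernel-verified Lean document; each statement's English description precedes it below -/
import Mathlib

section
/- Fix p ≥ 1, λ ≥ 0, γ ≥ 0, a symmetric matrix C ∈ ℝ^{2p×2p} that is S-swap invariant for every S ⊆ {1,...,p} (i.e., Π_SᵀC Π_S = C for every such S, where Π_S swaps coordinates j and j+p for all j ∈ S), and a vector d ∈ ℝ^{2p}. Suppose β̂(d) is a global minimizer of f_d(β) = ½·βᵀCβ − dᵀβ + λ‖β‖₁ + γ‖β‖₂², and define for each j ∈ {1,...,p} the statistic W_j(d) = |β̂(d)_j| − |β̂(d)_{j+p}|. Then the statistics satisfy the flip-sign property: for every S ⊆ {1,...,p}, choosing the minimizer β̂(Π_S d) = Π_S β̂(d) for the swapped data yields W_j(Π_S d) = −W_j(d) for all j ∈ S and W_j(Π_S d) = W_j(d) for all j ∉ S. -/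
open Matrix

/-- The coordinate permutation on `ℝ^{2p}` (indexed by `Fin p ⊕ Fin p`, where `Sum.inl j`
is coordinate `j` and `Sum.inr j` is coordinate `j + p`) that swaps the `j`-th and
`(j+p)`-th coordinates for every `j ∈ S` and fixes all other coordinates. -/
def swapFun {p : ℕ} (S : Finset (Fin p)) : (Fin p ⊕ Fin p) → (Fin p ⊕ Fin p)
  | Sum.inl j => if j ∈ S then Sum.inr j else Sum.inl j
  | Sum.inr j => if j ∈ S then Sum.inl j else Sum.inr j

/-- The objective `f_d(β) = ½ βᵀCβ − dᵀβ + λ‖β‖₁ + γ‖β‖₂²`. -/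
noncomputable def obj {p : ℕ} (C : Matrix (Fin p ⊕ Fin p) (Fin p ⊕ Fin p) ℝ)
    (d : (Fin p ⊕ Fin p) → ℝ) (lam gam : ℝ) (β : (Fin p ⊕ Fin p) → ℝ) : ℝ :=
  (1 / 2) * (β ⬝ᵥ C *ᵥ β) - d ⬝ᵥ β + lam * (∑ i, |β i|) + gam * (∑ i, (β i) ^ 2)

/-- The coefficient-difference statistic `W_j = |β_j| − |β_{j+p}|`. -/
def Wstat {p : ℕ} (β : (Fin p ⊕ Fin p) → ℝ) (j : Fin p) : ℝ :=
  |β (Sum.inl j)| - |β (Sum.inr j)|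

lemma swapFun_invol {p : ℕ} (S : Finset (Fin p)) (i : Fin p ⊕ Fin p) :
    swapFun S (swapFun S i) = i := by
  rcases i with j | j <;> by_cases h : j ∈ S <;> simp [swapFun, h]

/-- `swapFun S` as an equiv. -/
def swapEquiv {p : ℕ} (S : Finset (Fin p)) : (Fin p ⊕ Fin p) ≃ (Fin p ⊕ Fin p) :=
  ⟨swapFun S, swapFun S, swapFun_invol S, swapFun_invol S⟩

lemma obj_swap {p : ℕ} (C : Matrix (Fin p ⊕ Fin p) (Fin p ⊕ Fin p) ℝ)
    (S : Finset (Fin p)) (hswap : C.submatrix (swapFun S) (swapFun S) = C)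
    (d : (Fin p ⊕ Fin p) → ℝ) (lam gam : ℝ) (β : (Fin p ⊕ Fin p) → ℝ) :
    obj C (d ∘ swapFun S) lam gam (β ∘ swapFun S) = obj C d lam gam β := by
  have hC : ∀ i k, C (swapFun S i) (swapFun S k) = C i k := by
    intro i k
    have := congrFun (congrFun hswap i) k
    simpa [Matrix.submatrix_apply] using this
  have hsum : ∀ g : (Fin p ⊕ Fin p) → ℝ, ∑ i, g (swapFun S i) = ∑ i, g i :=
    fun g => Fintype.sum_equiv (swapEquiv S) _ _ (fun _ => rfl)
  have hq : (β ∘ swapFun S) ⬝ᵥ C *ᵥ (β ∘ swapFun S) = β ⬝ᵥ C *ᵥ β := by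
    simp only [dotProduct, Matrix.mulVec, Function.comp_apply]
    refine Fintype.sum_equiv (swapEquiv S) _ _ (fun i => ?_)
    simp only [swapEquiv, Equiv.coe_fn_mk, swapFun_invol]
    congr 1
    refine Fintype.sum_equiv (swapEquiv S) _ _ (fun k => ?_)
    simp [swapEquiv, swapFun_invol, hC]
  have hd : (d ∘ swapFun S) ⬝ᵥ (β ∘ swapFun S) = d ⬝ᵥ β := hsum (fun i => d i * β i)
  have ha : ∑ i, |(β ∘ swapFun S) i| = ∑ i, |β i| := hsum (fun i => |β i|)
  have hs : ∑ i, ((β ∘ swapFun S) i) ^ 2 = ∑ i, (β i) ^ 2 := hsum (fun i => (β i) ^ 2)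
  unfold obj
  rw [hq, hd, ha, hs]

/-- **Flip-sign property of the pseudo-lasso statistics.** If `C` is symmetric and
`S`-swap invariant for every `S`, and `β̂` is a global minimizer of `f_d`, then for every
`S ⊆ {1,…,p}`, `Π_S β̂` is a global minimizer of `f_{Π_S d}`, and the statistics computed
from this minimizer satisfy `W_j(Π_S d) = −W_j(d)` for `j ∈ S` and `W_j(Π_S d) = W_j(d)`
for `j ∉ S`. -/
theorem stmt_3 (p : ℕ) (hp : 1 ≤ p) (lam gam : ℝ) (hlam : 0 ≤ lam) (hgam : 0 ≤ gam)
    (C : Matrix (Fin p ⊕ Fin p) (Fin p ⊕ Fin p) ℝ) (hC : C.IsSymm)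
    (hswap : ∀ S : Finset (Fin p), C.submatrix (swapFun S) (swapFun S) = C)
    (d : (Fin p ⊕ Fin p) → ℝ) (βhat : (Fin p ⊕ Fin p) → ℝ)
    (hmin : ∀ β, obj C d lam gam βhat ≤ obj C d lam gam β) (S : Finset (Fin p)) :
    (∀ β, obj C (d ∘ swapFun S) lam gam (βhat ∘ swapFun S)
        ≤ obj C (d ∘ swapFun S) lam gam β)
    ∧ (∀ j ∈ S, Wstat (βhat ∘ swapFun S) j = -(Wstat βhat j))
    ∧ (∀ j ∉ S, Wstat (βhat ∘ swapFun S) j = Wstat βhat j) := by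
  constructor
  · intro β
    have h1 : obj C (d ∘ swapFun S) lam gam (βhat ∘ swapFun S) = obj C d lam gam βhat :=
      obj_swap C S (hswap S) d lam gam βhat
    have h2 : obj C (d ∘ swapFun S) lam gam β
        = obj C d lam gam (β ∘ swapFun S) := by
      have := obj_swap C S (hswap S) d lam gam (β ∘ swapFun S)
      have he : (β ∘ swapFun S) ∘ swapFun S = β := by
        funext i; simp [Function.comp, swapFun_invol]
      rw [he] at this
      exact this
    rw [h1, h2]
    exact hmin _
  constructor
  · intro j hj
    simp [Wstat, Function.comp, swapFun, hj]
  · intro j hj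
    simp [Wstat, Function.comp, swapFun, hj]
end

section
/- Let n, p ≥ 1, let X ∈ ℝ^{n×p} and Y ∈ ℝⁿ be fixed, let P ∈ ℝ^{p×p} be any matrix and V ∈ ℝ^{p×p} be any symmetric positive semidefinite matrix. Let E be an n × p random matrix with i.i.d. standard Gaussian entries and let Z ∼ N(0, V) be a Gaussian vector in ℝ^p. Define X̃ = X P + E V^{1/2}, where V^{1/2} is the symmetric positive semidefinite square root of V. Then the random vector X̃ᵀY has the same distribution as PᵀXᵀY + ‖Y‖₂ Z. -/
open Matrix MeasureTheory ProbabilityTheory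
open scoped ENNReal NNReal

open scoped ComplexOrder in
/-- The symmetric PSD square root of a positive semidefinite matrix, as defined in the older
Mathlib (`Matrix.PosSemidef.sqrt`, removed since). -/
noncomputable def Matrix.PosSemidef.sqrt {𝕜 : Type*} [RCLike 𝕜] {n : Type*} [Fintype n]
    [DecidableEq n] {A : Matrix n n 𝕜} (hA : A.PosSemidef) : Matrix n n 𝕜 :=
  (hA.1.eigenvectorUnitary : Matrix n n 𝕜) * diagonal ((↑) ∘ (√·) ∘ hA.1.eigenvalues) *
    (star (hA.1.eigenvectorUnitary : Matrix n n 𝕜))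

/-- The standard Gaussian measure `N(0, I)` on `ι → ℝ`. -/
noncomputable def stdGaussian (ι : Type*) [Fintype ι] : Measure (ι → ℝ) :=
  Measure.pi fun _ : ι => gaussianReal 0 1

/-- The centered Gaussian measure `N(0, V)` on `ι → ℝ` with covariance the symmetric
positive semidefinite matrix `V`, realized as the pushforward of the standard Gaussian
under multiplication by the symmetric PSD square root `V^{1/2}`. -/
noncomputable def gaussianVec {ι : Type*} [Fintype ι] [DecidableEq ι]
    {V : Matrix ι ι ℝ} (hV : V.PosSemidef) : Measure (ι → ℝ) :=
  (stdGaussian ι).map fun z => hV.sqrt *ᵥ z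

lemma aux_lintegral_pi_prod (m : ℕ) (g : Fin m → ℝ → ℝ≥0∞) (hg : ∀ i, Measurable (g i)) :
    ∫⁻ x, ∏ i, g i (x i) ∂(Measure.pi fun _ : Fin m => (volume : Measure ℝ))
      = ∏ i, ∫⁻ t, g i t := by
  induction m with
  | zero => simp [Measure.pi_of_empty]
  | succ m ih =>
      have hmp := (measurePreserving_piFinSuccAbove (fun _ : Fin (m+1) => (volume : Measure ℝ)) 0).symm
      have hmeas : Measurable fun x : Fin (m+1) → ℝ => ∏ i, g i (x i) :=
        Finset.measurable_prod _ fun i _ => (hg i).comp (measurable_pi_apply i)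
      rw [← hmp.lintegral_comp hmeas]
      simp_rw [MeasurableEquiv.piFinSuccAbove_symm_apply, Fin.insertNthEquiv,
        Fin.prod_univ_succ, Fin.insertNth_zero]
      simp only [Fin.zero_succAbove, Equiv.coe_fn_mk, Fin.cons_zero, Fin.cons_succ, cast_eq]
      rw [lintegral_prod_mul (f := g 0) (g := fun y : Fin m → ℝ => ∏ i, g i.succ (y i))
        (hg 0).aemeasurable
        (Finset.measurable_prod _ fun i _ => (hg i.succ).comp (measurable_pi_apply i)).aemeasurable]
      rw [ih (fun i => g i.succ) (fun i => hg i.succ)]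

lemma aux_stdGaussian_eq (m : ℕ) :
    stdGaussian (Fin m) = (volume : Measure (Fin m → ℝ)).withDensity
      (fun x => ∏ i, gaussianPDF 0 1 (x i)) := by
  have key : Measure.pi (fun _ : Fin m => gaussianReal 0 1)
      = ((volume : Measure (Fin m → ℝ)).withDensity
        (fun x => ∏ i, gaussianPDF 0 1 (x i))) := by
    refine Measure.pi_eq fun s hs => ?_
    rw [withDensity_apply _ (MeasurableSet.univ_pi hs),
      ← lintegral_indicator (MeasurableSet.univ_pi hs) _]
    have hpt : ∀ x : Fin m → ℝ,
        (Set.univ.pi s).indicator (fun x => ∏ i, gaussianPDF 0 1 (x i)) x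
          = ∏ i, (s i).indicator (gaussianPDF 0 1) (x i) := by
      intro x
      by_cases hx : x ∈ Set.univ.pi s
      · rw [Set.indicator_of_mem hx]
        exact Finset.prod_congr rfl fun i _ =>
          (Set.indicator_of_mem (hx i (Set.mem_univ i)) _).symm
      · rw [Set.indicator_of_notMem hx]
        rw [Set.mem_univ_pi] at hx
        push_neg at hx
        obtain ⟨i, hi⟩ := hx
        exact (Finset.prod_eq_zero (Finset.mem_univ i)
          (Set.indicator_of_notMem hi _)).symm
    simp_rw [hpt]
    rw [volume_pi, aux_lintegral_pi_prod m _
      (fun i => (measurable_gaussianPDF 0 1).indicator (hs i))]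
    refine Finset.prod_congr rfl fun i _ => ?_
    rw [lintegral_indicator (hs i) _, ← withDensity_apply _ (hs i),
      ← gaussianReal_of_var_ne_zero 0 one_ne_zero]
  exact key

lemma aux_measurable_mulVec {k l : ℕ} (M : Matrix (Fin k) (Fin l) ℝ) :
    Measurable fun w : Fin l → ℝ => M *ᵥ w := by
  refine measurable_pi_lambda _ fun i => ?_
  simp only [Matrix.mulVec, dotProduct]
  exact Finset.measurable_sum _ fun j _ => (measurable_pi_apply (X := fun _ => ℝ) j).const_mul (M i j)

lemma aux_mulVec_norm (m : ℕ) (M : Matrix (Fin m) (Fin m) ℝ) (hM : M * Mᵀ = 1)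
    (x : Fin m → ℝ) : ∑ i, (M *ᵥ x) i ^ 2 = ∑ i, x i ^ 2 := by
  have h1 : Mᵀ * M = 1 := mul_eq_one_comm.mp hM
  have key : (M *ᵥ x) ⬝ᵥ (M *ᵥ x) = x ⬝ᵥ x := by
    rw [dotProduct_mulVec, ← Matrix.transpose_transpose M,
      Matrix.vecMul_transpose, Matrix.transpose_transpose, Matrix.mulVec_mulVec, h1,
      Matrix.one_mulVec]
  simpa [dotProduct, pow_two] using key

lemma aux_prod_pdf (m : ℕ) (y : Fin m → ℝ) :
    ∏ i, gaussianPDF 0 1 (y i)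
      = ENNReal.ofReal ((Real.sqrt (2 * Real.pi))⁻¹ ^ m * Real.exp (-(∑ i, y i ^ 2) / 2)) := by
  simp only [gaussianPDF_def]
  rw [← ENNReal.ofReal_prod_of_nonneg (fun i _ => gaussianPDFReal_nonneg 0 1 (y i))]
  congr 1
  simp only [gaussianPDFReal_def, NNReal.coe_one, mul_one, sub_zero]
  rw [Finset.prod_mul_distrib, Finset.prod_const, ← Real.exp_sum]
  congr 2
  · simp [Finset.card_univ]
  · rw [← Finset.sum_div, Finset.sum_neg_distrib, neg_div]

lemma aux_rotation (m : ℕ) (M : Matrix (Fin m) (Fin m) ℝ) (hM : M * Mᵀ = 1) :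
    (stdGaussian (Fin m)).map (fun w => M *ᵥ w) = stdGaussian (Fin m) := by
  have hdetsq : M.det * M.det = 1 := by
    have h := congrArg Matrix.det hM
    rwa [Matrix.det_mul, Matrix.det_transpose, Matrix.det_one] at h
  have hdet : M.det ≠ 0 := fun h => by simp [h] at hdetsq
  have habs : |M.det⁻¹| = 1 := by
    rw [abs_inv]
    rw [inv_eq_one]
    nlinarith [abs_nonneg M.det, sq_abs M.det]
  have hmeas := aux_measurable_mulVec M
  have hvol : Measure.map (fun w => M *ᵥ w) (volume : Measure (Fin m → ℝ)) = volume := by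
    have h := Real.map_matrix_volume_pi_eq_smul_volume_pi hdet
    have hfun : (⇑(Matrix.toLin' M) : (Fin m → ℝ) → Fin m → ℝ) = fun w => M *ᵥ w := by
      funext w; simp [Matrix.toLin'_apply]
    rw [hfun] at h
    rw [h, habs, ENNReal.ofReal_one, one_smul]
  have hFmeas : Measurable fun x : Fin m → ℝ => ∏ i, gaussianPDF 0 1 (x i) :=
    Finset.measurable_prod _ fun i _ => (measurable_gaussianPDF 0 1).comp (measurable_pi_apply i)
  ext s hs
  rw [Measure.map_apply hmeas hs, aux_stdGaussian_eq,
    withDensity_apply _ (hmeas hs), withDensity_apply _ hs]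
  calc ∫⁻ x in (fun w => M *ᵥ w) ⁻¹' s, (∏ i, gaussianPDF 0 1 (x i)) ∂volume
      = ∫⁻ x in (fun w => M *ᵥ w) ⁻¹' s, (∏ i, gaussianPDF 0 1 ((M *ᵥ x) i)) ∂volume := by
        refine setLIntegral_congr_fun (hmeas hs) (fun x _ => ?_)
        rw [aux_prod_pdf, aux_prod_pdf, aux_mulVec_norm m M hM]
    _ = ∫⁻ y in s, ∏ i, gaussianPDF 0 1 (y i) ∂(Measure.map (fun w => M *ᵥ w) volume) :=
        (setLIntegral_map hs hFmeas hmeas).symm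
    _ = ∫⁻ y in s, ∏ i, gaussianPDF 0 1 (y i) ∂volume := by rw [hvol]

lemma aux_marginal {ι : Type*} [Fintype ι] [DecidableEq ι] (ν : Measure ℝ)
    [IsProbabilityMeasure ν] (i0 : ι) :
    (Measure.pi fun _ : ι => ν).map (fun w => w i0) = ν := by
  ext s hs
  rw [Measure.map_apply (measurable_pi_apply i0) hs]
  have : (fun w : ι → ℝ => w i0) ⁻¹' s
      = Set.univ.pi (Function.update (fun _ : ι => (Set.univ : Set ℝ)) i0 s) := by
    ext w
    simp only [Set.mem_preimage, Set.mem_univ_pi]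
    constructor
    · intro hw j
      by_cases hj : j = i0
      · subst hj; simpa using hw
      · simp [Function.update_of_ne hj]
    · intro hw
      simpa using hw i0
  rw [this, Measure.pi_pi]
  rw [Fintype.prod_eq_single i0 (fun j hj => by simp [Function.update_of_ne hj])]
  simp

lemma aux_pi_map_pi {ι : Type*} [Fintype ι] {α β : ι → Type*}
    [∀ i, MeasurableSpace (α i)] [∀ i, MeasurableSpace (β i)]
    (μ : ∀ i, Measure (α i)) [∀ i, IsProbabilityMeasure (μ i)]
    (f : ∀ i, α i → β i) (hf : ∀ i, Measurable (f i)) :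
    (Measure.pi μ).map (fun w i => f i (w i)) = Measure.pi (fun i => (μ i).map (f i)) := by
  haveI : ∀ i, IsProbabilityMeasure ((μ i).map (f i)) :=
    fun i => Measure.isProbabilityMeasure_map (hf i).aemeasurable
  refine (Measure.pi_eq fun s hs => ?_).symm
  have hm : Measurable fun (w : ∀ i, α i) (i : ι) => f i (w i) :=
    measurable_pi_lambda _ fun i => (hf i).comp (measurable_pi_apply i)
  rw [Measure.map_apply hm (MeasurableSet.univ_pi hs)]
  have : (fun w i => f i (w i)) ⁻¹' Set.univ.pi s = Set.univ.pi (fun i => f i ⁻¹' s i) := by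
    ext w; simp [Set.mem_univ_pi]
  rw [this, Measure.pi_pi]
  exact Finset.prod_congr rfl fun i _ => (Measure.map_apply (hf i) (hs i)).symm

lemma aux_joint {ι : Type*} [Fintype ι] {Ω : Type*} [MeasurableSpace Ω]
    (μ : Measure Ω) [IsProbabilityMeasure μ]
    (X : ι → Ω → ℝ) (hX : ∀ i, Measurable (X i))
    (h : iIndepFun X μ)
    (ν : ι → Measure ℝ) [∀ i, IsProbabilityMeasure (ν i)]
    (hlaw : ∀ i, μ.map (X i) = ν i) :
    μ.map (fun ω i => X i ω) = Measure.pi ν := by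
  refine (Measure.pi_eq fun s hs => ?_).symm
  rw [Measure.map_apply (measurable_pi_lambda _ hX) (MeasurableSet.univ_pi hs)]
  have : (fun ω i => X i ω) ⁻¹' Set.univ.pi s = ⋂ i ∈ Finset.univ, X i ⁻¹' s i := by
    ext ω; simp [Set.mem_univ_pi]
  rw [this, h.measure_inter_preimage_eq_mul Finset.univ (fun i _ => hs i)]
  exact Finset.prod_congr rfl fun i _ => by
    rw [← hlaw i, Measure.map_apply (hX i) (hs i)]

lemma aux_prod_pi (n p : ℕ) (ν : Measure ℝ) [IsProbabilityMeasure ν] :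
    Measure.map (fun u (q : Fin n × Fin p) => u q.2 q.1)
        (Measure.pi fun _ : Fin p => Measure.pi fun _ : Fin n => ν)
      = Measure.pi fun _ : Fin n × Fin p => ν := by
  have hmeas : Measurable fun (u : Fin p → Fin n → ℝ) (q : Fin n × Fin p) => u q.2 q.1 :=
    measurable_pi_lambda _ fun q =>
      (measurable_pi_apply q.1).comp (measurable_pi_apply q.2)
  refine (Measure.pi_eq fun s hs => ?_).symm
  rw [Measure.map_apply hmeas (MeasurableSet.univ_pi hs)]
  have : (fun (u : Fin p → Fin n → ℝ) (q : Fin n × Fin p) => u q.2 q.1) ⁻¹' Set.univ.pi s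
      = Set.univ.pi (fun j : Fin p => Set.univ.pi fun i : Fin n => s (i, j)) := by
    ext u
    simp only [Set.mem_preimage, Set.mem_univ_pi]
    exact ⟨fun h j i => h (i, j), fun h q => h q.2 q.1⟩
  rw [this, Measure.pi_pi]
  simp_rw [Measure.pi_pi]
  rw [Fintype.prod_prod_type]
  exact Finset.prod_comm

lemma aux_marginal_std {ι : Type*} [Fintype ι] [DecidableEq ι] (i0 : ι) :
    (stdGaussian ι).map (fun f => f i0) = gaussianReal 0 1 :=
  aux_marginal (gaussianReal 0 1) i0

lemma aux_measurable_lin (m : ℕ) (Y : Fin m → ℝ) :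
    Measurable fun w : Fin m → ℝ => ∑ i, Y i * w i :=
  Finset.measurable_sum _ fun i _ => (measurable_pi_apply (X := fun _ => ℝ) i).const_mul (Y i)

lemma aux_lin_comb (m : ℕ) (Y : Fin m → ℝ) :
    (stdGaussian (Fin m)).map (fun w => ∑ i, Y i * w i)
      = gaussianReal 0 ⟨∑ i, Y i ^ 2, by positivity⟩ := by
  by_cases hY : Y = 0
  · subst hY
    have h0 : (⟨∑ i, ((0 : Fin m → ℝ) i) ^ 2, by positivity⟩ : ℝ≥0) = (0 : ℝ≥0) := by
      ext; simp
    rw [h0, gaussianReal_zero_var]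
    have : (fun w : Fin m → ℝ => ∑ i, (0 : Fin m → ℝ) i * w i) = fun _ => (0 : ℝ) := by
      funext w; simp
    rw [this, Measure.map_const]
    haveI : IsProbabilityMeasure (stdGaussian (Fin m)) := by
      unfold _root_.stdGaussian; infer_instance
    simp
  · obtain ⟨i0, hi0⟩ : ∃ i, Y i ≠ 0 := by
      by_contra h; push_neg at h; exact hY (funext h)
    set c : ℝ := Real.sqrt (∑ i, Y i ^ 2) with hc
    have hsum_pos : 0 < ∑ i, Y i ^ 2 :=
      Finset.sum_pos' (fun i _ => sq_nonneg _) ⟨i0, Finset.mem_univ i0, by positivity⟩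
    have hcpos : 0 < c := Real.sqrt_pos.mpr hsum_pos
    have hc2 : c ^ 2 = ∑ i, Y i ^ 2 := Real.sq_sqrt hsum_pos.le
    set u : EuclideanSpace ℝ (Fin m) := WithLp.toLp 2 (fun i => c⁻¹ * Y i) with hu
    have hnorm : ‖u‖ = 1 := by
      rw [EuclideanSpace.norm_eq]
      have : ∑ i, ‖u i‖ ^ 2 = 1 := by
        simp_rw [hu, Real.norm_eq_abs, sq_abs, mul_pow, ← Finset.mul_sum, ← hc2]
        field_simp
      rw [this, Real.sqrt_one]
    have hON : Orthonormal ℝ (({i0} : Set (Fin m)).restrict fun _ => u) := by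
      constructor
      · intro i; exact hnorm
      · intro i j hij
        exact absurd (Subsingleton.elim i j) hij
    obtain ⟨b, hb⟩ := hON.exists_orthonormalBasis_extension_of_card_eq
      (by simp [finrank_euclideanSpace_fin])
    set M : Matrix (Fin m) (Fin m) ℝ := Matrix.of (fun i j => b i j) with hMdef
    have hMorth : M * Mᵀ = 1 := by
      have hon := b.orthonormal
      rw [orthonormal_iff_ite] at hon
      ext i k
      have h := hon i k
      simp only [PiLp.inner_apply, RCLike.inner_apply, conj_trivial] at h
      simp only [Matrix.mul_apply, Matrix.transpose_apply, Matrix.one_apply, hMdef,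
        Matrix.of_apply]
      rw [← h]; exact Finset.sum_congr rfl fun _ _ => mul_comm _ _
    have hbu : b i0 = u := hb i0 rfl
    have hkey : (fun w : Fin m → ℝ => ∑ i, Y i * w i)
        = (fun t : ℝ => c * t) ∘ ((fun v : Fin m → ℝ => v i0) ∘ (fun w => M *ᵥ w)) := by
      funext w
      simp only [Function.comp_apply, Matrix.mulVec, dotProduct]
      rw [Finset.mul_sum]
      refine Finset.sum_congr rfl fun j _ => ?_
      have hM0 : M i0 j = c⁻¹ * Y j := by
        simp only [hMdef, Matrix.of_apply, hbu, hu]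
      rw [hM0]
      field_simp
    rw [hkey, ← Measure.map_map (measurable_const_mul c)
        ((measurable_pi_apply i0).comp (aux_measurable_mulVec M)),
      ← Measure.map_map (measurable_pi_apply i0) (aux_measurable_mulVec M),
      aux_rotation m M hMorth, aux_marginal_std i0,
      gaussianReal_map_const_mul]
    congr 1
    · simp
    · ext
      simp [hc2]
      rfl

/-- If `E` is an `n × p` random matrix with i.i.d. standard Gaussian entries,
`Z ∼ N(0, V)`, and `X̃ = X P + E V^{1/2}`, then `X̃ᵀ Y` has the same distribution as
`Pᵀ Xᵀ Y + ‖Y‖₂ Z`. -/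
theorem stmt_6 (n p : ℕ) (hn : 1 ≤ n) (hp : 1 ≤ p)
    (X : Matrix (Fin n) (Fin p) ℝ) (Y : Fin n → ℝ)
    (P : Matrix (Fin p) (Fin p) ℝ) (V : Matrix (Fin p) (Fin p) ℝ) (hV : V.PosSemidef)
    {Ω : Type*} [MeasurableSpace Ω] (μ : Measure Ω) [IsProbabilityMeasure μ]
    (E : Ω → Fin n → Fin p → ℝ) (hE : Measurable E)
    (hiid : iIndepFun
      (fun (ij : Fin n × Fin p) ω => E ω ij.1 ij.2) μ)
    (hElaw : ∀ i j, Measure.map (fun ω => E ω i j) μ = gaussianReal 0 1)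
    (Z : Ω → Fin p → ℝ) (hZ : Measurable Z)
    (hZlaw : Measure.map Z μ = gaussianVec hV) :
    Measure.map (fun ω => (X * P + Matrix.of (E ω) * hV.sqrt)ᵀ *ᵥ Y) μ
      = Measure.map (fun ω => Pᵀ *ᵥ (Xᵀ *ᵥ Y) + Real.sqrt (∑ i, (Y i) ^ 2) • Z ω) μ := by
  classical
  set S : Matrix (Fin p) (Fin p) ℝ := hV.sqrt with hSdef
  set a : Fin p → ℝ := Pᵀ *ᵥ (Xᵀ *ᵥ Y) with hadef
  set c : ℝ := Real.sqrt (∑ i, (Y i) ^ 2) with hcdef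
  set vY : ℝ≥0 := ⟨∑ i, (Y i) ^ 2, by positivity⟩ with hvYdef
  have hc2 : c ^ 2 = ∑ i, (Y i) ^ 2 := Real.sq_sqrt (by positivity)
  have hSsymm : Sᵀ = S := by
    have h : Sᴴ = S := by
      simp only [hSdef, Matrix.PosSemidef.sqrt, Matrix.conjTranspose_mul, Matrix.star_eq_conjTranspose,
        Matrix.conjTranspose_conjTranspose, Matrix.diagonal_conjTranspose, Matrix.mul_assoc]
      congr 2
    ext i j
    have := congrFun (congrFun h i) j
    simpa [Matrix.conjTranspose_apply] using this
  -- measurability helpers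
  have hEij : ∀ q : Fin n × Fin p, Measurable fun ω => E ω q.1 q.2 := fun q =>
    (measurable_pi_apply q.2).comp ((measurable_pi_apply q.1).comp hE)
  have hW : Measurable fun ω (q : Fin n × Fin p) => E ω q.1 q.2 :=
    measurable_pi_lambda _ hEij
  have hg1 : Measurable fun (w : Fin n × Fin p → ℝ) (j : Fin p) => ∑ i, Y i * w (i, j) :=
    measurable_pi_lambda _ fun j => Finset.measurable_sum _ fun i _ =>
      (measurable_pi_apply (X := fun _ => ℝ) (i, j)).const_mul (Y i)
  have hin : Measurable fun ω (j : Fin p) => ∑ i, Y i * E ω i j :=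
    measurable_pi_lambda _ fun j => Finset.measurable_sum _ fun i _ =>
      (hEij (i, j)).const_mul (Y i)
  have hout : Measurable fun t : Fin p → ℝ => a + S *ᵥ t :=
    measurable_const.add (aux_measurable_mulVec S)
  have houtZ : Measurable fun z : Fin p → ℝ => a + c • z :=
    measurable_const.add (measurable_id.const_smul c)
  have hreidx : Measurable fun (u : Fin p → Fin n → ℝ) (q : Fin n × Fin p) => u q.2 q.1 :=
    measurable_pi_lambda _ fun q =>
      (measurable_pi_apply q.1).comp (measurable_pi_apply q.2)
  -- rewrite LHS integrand
  have hfun : (fun ω => (X * P + Matrix.of (E ω) * S)ᵀ *ᵥ Y)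
      = fun ω => a + S *ᵥ (fun j => ∑ i, Y i * E ω i j) := by
    funext ω
    rw [Matrix.transpose_add, Matrix.add_mulVec, Matrix.transpose_mul, Matrix.transpose_mul,
      ← Matrix.mulVec_mulVec, ← Matrix.mulVec_mulVec, hSsymm]
    congr 1
    congr 1
    ext j
    simp [Matrix.mulVec, dotProduct, mul_comm]
  -- joint law of E
  have hjoint : μ.map (fun ω (q : Fin n × Fin p) => E ω q.1 q.2)
      = Measure.pi (fun _ : Fin n × Fin p => gaussianReal 0 1) :=
    aux_joint μ (fun (q : Fin n × Fin p) ω => E ω q.1 q.2) hEij hiid _ (fun (q : Fin n × Fin p) => hElaw q.1 q.2)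
  -- law of the inner vector
  have hinlaw : μ.map (fun ω (j : Fin p) => ∑ i, Y i * E ω i j)
      = Measure.pi (fun _ : Fin p => gaussianReal 0 vY) := by
    have comp1 : (fun ω (j : Fin p) => ∑ i, Y i * E ω i j)
        = (fun (w : Fin n × Fin p → ℝ) (j : Fin p) => ∑ i, Y i * w (i, j))
          ∘ (fun ω (q : Fin n × Fin p) => E ω q.1 q.2) := rfl
    rw [comp1, ← Measure.map_map hg1 hW, hjoint, ← aux_prod_pi n p (gaussianReal 0 1),
      Measure.map_map hg1 hreidx]
    have comp2 : ((fun (w : Fin n × Fin p → ℝ) (j : Fin p) => ∑ i, Y i * w (i, j))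
          ∘ (fun (u : Fin p → Fin n → ℝ) (q : Fin n × Fin p) => u q.2 q.1))
        = fun (u : Fin p → Fin n → ℝ) (j : Fin p) => ∑ i, Y i * u j i := rfl
    rw [comp2]
    have hpm := aux_pi_map_pi (fun _ : Fin p => Measure.pi fun _ : Fin n => gaussianReal 0 1)
      (fun _ => fun w : Fin n → ℝ => ∑ i, Y i * w i) (fun _ => aux_measurable_lin n Y)
    rw [hpm]
    exact congrArg Measure.pi (funext fun _ => aux_lin_comb n Y)
  -- product of scaled gaussians as pushforward of std gaussian
  have hscale : Measure.pi (fun _ : Fin p => gaussianReal 0 vY)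
      = (stdGaussian (Fin p)).map (fun z (j : Fin p) => c * z j) := by
    have hpm := aux_pi_map_pi (fun _ : Fin p => gaussianReal 0 1)
      (fun _ => fun t : ℝ => c * t) (fun _ => measurable_const_mul c)
    beta_reduce at hpm
    rw [gaussianReal_map_const_mul] at hpm
    have hv : NNReal.mk (c ^ 2) (sq_nonneg c) * 1 = vY := by
      ext; simp [hc2, hvYdef]; rfl
    rw [mul_zero, hv] at hpm
    exact hpm.symm
  -- conclude
  have comp3 : (fun ω => a + S *ᵥ fun j => ∑ i, Y i * E ω i j)
      = (fun t : Fin p → ℝ => a + S *ᵥ t) ∘ (fun ω (j : Fin p) => ∑ i, Y i * E ω i j) := rfl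
  rw [hfun, comp3, ← Measure.map_map hout hin, hinlaw, hscale,
    Measure.map_map hout (measurable_pi_lambda (fun (z : Fin p → ℝ) (j : Fin p) => c * z j)
      fun j => (measurable_pi_apply (X := fun _ => ℝ) j).const_mul c)]
  have hZcomp : (fun ω => a + c • Z ω) = (fun z : Fin p → ℝ => a + c • z) ∘ Z := rfl
  rw [hZcomp, ← Measure.map_map houtZ hZ, hZlaw]
  unfold gaussianVec
  rw [Measure.map_map houtZ (aux_measurable_mulVec hV.sqrt)]
  refine congrArg (fun f => Measure.map f (stdGaussian (Fin p))) ?_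
  funext z
  show a + S *ᵥ (fun j => c * z j) = a + c • (hV.sqrt *ᵥ z)
  rw [show (fun j => c * z j) = c • z from funext fun j => rfl, Matrix.mulVec_smul]
end
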